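/- arXiv:2409.10885 — 2 statements merged into one kernel-verified Lean document; each statement's English description precedes it below -/
import Mathlib

section
/- Let $j, m$ be natural numbers with $m \geq 1$ and $j \geq 5m$. Let $S$ be a finite set with $|S| = j + m$, let $P$ be a partition of $S$ into nonempty blocks, and let $M$ be a subset of the blocks of $P$ with $|M| = j - m$ (the "marked" blocks). Then at least $m + 1$ of the blocks in $M$ are singletons (blocks of cardinality exactly $1$). -/
/-- If `j ≥ 5m` with `m ≥ 1`, `S` is a finite set with `|S| = j + m`, `P` is a
partition of `S` into nonempty blocks, and `M` is a set of `j - m` "marked"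
blocks of `P`, then at least `m + 1` of the marked blocks are singletons. -/
theorem marked_singletons_of_partition {α : Type*} [DecidableEq α]
    (j m : ℕ) (hm : 1 ≤ m) (hj : 5 * m ≤ j)
    (S : Finset α) (hS : S.card = j + m)
    (P : Finpartition S) (M : Finset (Finset α)) (hM : M ⊆ P.parts)
    (hMcard : M.card = j - m) :
    m + 1 ≤ (M.filter fun b => b.card = 1).card := by
  set s := (M.filter fun b => b.card = 1).card with hs
  set k := (M.filter fun b => ¬ b.card = 1).card with hk
  have hsk : s + k = M.card := Finset.card_filter_add_card_filter_not _
  have hsum : ∑ b ∈ M, b.card ≤ j + m := by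
    rw [← hS, ← P.sum_card_parts]
    exact Finset.sum_le_sum_of_subset hM
  have hlow : s + 2 * k ≤ ∑ b ∈ M, b.card := by
    rw [← Finset.filter_union_filter_not_eq (fun b => b.card = 1) M,
      Finset.sum_union (Finset.disjoint_filter_filter_not M M _)]
    have h1 : s ≤ ∑ b ∈ M.filter (fun b => b.card = 1), b.card := by
      rw [hs, Finset.card_eq_sum_ones]
      exact Finset.sum_le_sum fun b hb => by
        simp only [Finset.mem_filter] at hb; omega
    have h2 : 2 * k ≤ ∑ b ∈ M.filter (fun b => ¬ b.card = 1), b.card := by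
      have := Finset.card_nsmul_le_sum (M.filter (fun b => ¬ b.card = 1))
        (fun b => b.card) 2 (fun b hb => by
          simp only [Finset.mem_filter] at hb
          have : b.Nonempty := P.nonempty_of_mem_parts (hM hb.1)
          have := Finset.card_pos.mpr this
          show 2 ≤ b.card
          omega)
      simpa [hk, Nat.mul_comm, smul_eq_mul] using this
    omega
  have hMc : M.card + m = j := by omega
  omega
end

section
/- Let $j, m$ be natural numbers with $m \geq 1$ and $j \geq 5m$. Let $L$ and $R$ be disjoint finite sets with $|L| = j$ and $|R| = m$, let $P$ be a partition of $S = L \cup R$ into nonempty blocks, and let $M$ be a subset of the blocks of $P$ with $|M| = j - m$ (the "marked" blocks). Then there exists a marked block that is a singleton contained in $L$. -/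
/-- If `j ≥ 5m` with `m ≥ 1`, `L` and `R` are disjoint finite sets with
`|L| = j` and `|R| = m`, `P` is a partition of `L ∪ R`, and `M` is a set of
`j - m` marked blocks of `P`, then some marked block is a singleton contained
in `L`. -/
theorem exists_marked_singleton_in_left {α : Type*} [DecidableEq α]
    (j m : ℕ) (hm : 1 ≤ m) (hj : 5 * m ≤ j)
    (L R : Finset α) (hdisj : Disjoint L R) (hL : L.card = j) (hR : R.card = m)
    (P : Finpartition (L ∪ R)) (M : Finset (Finset α)) (hM : M ⊆ P.parts)
    (hMcard : M.card = j - m) :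
    ∃ b ∈ M, ∃ a ∈ L, b = {a} := by
  classical
  have hsum : ∑ b ∈ P.parts, b.card = j + m := by
    rw [P.sum_card_parts, Finset.card_union_of_disjoint hdisj, hL, hR]
  have hsplitP := Finset.card_filter_add_card_filter_not
    (s := P.parts) (p := fun b => 2 ≤ b.card)
  have hTsub : P.parts.filter (fun b => 2 ≤ b.card) ⊆ P.parts :=
    Finset.filter_subset _ _
  have hTsum : P.parts.card + (P.parts.filter (fun b => 2 ≤ b.card)).card
      ≤ ∑ b ∈ P.parts, b.card := by
    calc P.parts.card + (P.parts.filter (fun b => 2 ≤ b.card)).card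
        = ∑ b ∈ P.parts, (if 2 ≤ b.card then 2 else 1) := by
          rw [Finset.sum_ite, Finset.sum_const, Finset.sum_const]
          simp only [smul_eq_mul]
          omega
      _ ≤ ∑ b ∈ P.parts, b.card := by
          apply Finset.sum_le_sum
          intro b hb
          have h1 : 1 ≤ b.card := Finset.card_pos.2 (P.nonempty_of_mem_parts hb)
          split <;> omega
  have hMparts : M.card ≤ P.parts.card := Finset.card_le_card hM
  have hT2m : (P.parts.filter (fun b => 2 ≤ b.card)).card ≤ 2 * m := by omega
  -- marked singleton blocks
  have hMsplit := Finset.card_filter_add_card_filter_not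
    (s := M) (p := fun b => b.card = 1)
  have hsub : M.filter (fun b => ¬ b.card = 1) ⊆ P.parts.filter (fun b => 2 ≤ b.card) := by
    intro b hb
    simp only [Finset.mem_filter] at hb ⊢
    have hbP := hM hb.1
    have h1 : 1 ≤ b.card := Finset.card_pos.2 (P.nonempty_of_mem_parts hbP)
    exact ⟨hbP, by omega⟩
  have hS1card : m < (M.filter (fun b => b.card = 1)).card := by
    have := Finset.card_le_card hsub
    omega
  -- singleton blocks contained in R
  have hSRcard : ((M.filter (fun b => b.card = 1)).filter
      (fun b => ∃ a ∈ R, b = {a})).card ≤ m := by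
    have hsub2 : (M.filter (fun b => b.card = 1)).filter (fun b => ∃ a ∈ R, b = {a})
        ⊆ R.image (fun a => ({a} : Finset α)) := by
      intro b hb
      simp only [Finset.mem_filter] at hb
      obtain ⟨a, ha, rfl⟩ := hb.2
      exact Finset.mem_image_of_mem _ ha
    calc _ ≤ _ := Finset.card_le_card hsub2
      _ ≤ R.card := Finset.card_image_le
      _ = m := hR
  have hex : ∃ b ∈ M.filter (fun b => b.card = 1),
      b ∉ (M.filter (fun b => b.card = 1)).filter (fun b => ∃ a ∈ R, b = {a}) := by
    by_contra h
    push_neg at h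
    have := Finset.card_le_card h
    omega
  obtain ⟨b, hbS1, hbSR⟩ := hex
  simp only [Finset.mem_filter] at hbS1
  obtain ⟨a, rfl⟩ := Finset.card_eq_one.1 hbS1.2
  refine ⟨{a}, hbS1.1, a, ?_, rfl⟩
  have haLR : a ∈ L ∪ R := P.le (hM hbS1.1) (Finset.mem_singleton_self a)
  have haR : a ∉ R := by
    intro haR
    exact hbSR (Finset.mem_filter.2 ⟨Finset.mem_filter.2 hbS1, a, haR, rfl⟩)
  rcases Finset.mem_union.1 haLR with h | h
  · exact h
  · exact absurd h haR
end
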